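/- If two nodes v_i, v_j of a graph are exchanged by a graph automorphism π (π(i) = j), then the multisets of wavelet coefficients {Ψ_{ri} : r ∈ V} and {Ψ_{rj} : r ∈ V} coincide, hence MDPA(Ψ_i, Ψ_j) = 0 and s(v_i, v_j) = e^0 = 1. -/

import Mathlib

/-- Minimum difference of pair assignments between two lists of reals indexed by a
finite type. -/
noncomputable def MDPA {V : Type*} [Fintype V] [DecidableEq V] (x y : V → ℝ) : ℝ :=
  Finset.univ.inf' Finset.univ_nonempty fun σ : Equiv.Perm V => ∑ r, |x r - y (σ r)|

attribute [local instance] Matrix.linftyOpNormedRing Matrix.linftyOpNormedAlgebra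

lemma exp_equivariant {V : Type*} [Fintype V] [DecidableEq V] [Nonempty V]
    (A : Matrix V V ℝ) (π : Equiv.Perm V) (hA : ∀ r s, A (π r) (π s) = A r s)
    (r s : V) : NormedSpace.exp A (π r) (π s) = NormedSpace.exp A r s := by
  have hcont : Continuous ⇑(Matrix.reindexAlgEquiv ℝ ℝ π) := by
    have : ⇑(Matrix.reindexAlgEquiv ℝ ℝ π)
        = fun M : Matrix V V ℝ => M.submatrix ⇑π.symm ⇑π.symm := rfl
    rw [this]
    exact continuous_id.matrix_submatrix _ _
  have hfix : Matrix.reindexAlgEquiv ℝ ℝ π A = A := by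
    ext r s
    simp only [Matrix.reindexAlgEquiv_apply, Matrix.reindex_apply, Matrix.submatrix_apply]
    have := hA (π.symm r) (π.symm s)
    simpa using this.symm
  have hmap := NormedSpace.map_exp (Matrix.reindexAlgEquiv ℝ ℝ π) hcont A
  rw [hfix] at hmap
  have := congrFun (congrFun hmap (π r)) (π s)
  simp at this
  exact this.symm

/-- if nodes `i, j` are exchanged by a graph automorphism `π` (a
permutation preserving the Laplacian, with `π i = j`), then the multisets of wavelet
coefficients of the columns `Ψᵢ` and `Ψⱼ` of `Ψ = e^{-τL}` coincide, hence
`MDPA(Ψᵢ, Ψⱼ) = 0` and `s(vᵢ,vⱼ) = e⁰ = 1`. -/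
theorem automorphism_similarity_one {V : Type*} [Fintype V] [DecidableEq V]
    (τ : ℝ) (hτ : 0 < τ) (L : Matrix V V ℝ)
    (Ψ : Matrix V V ℝ) (hΨ : Ψ = NormedSpace.exp ((-τ) • L))
    (π : Equiv.Perm V) (hπ : ∀ r s, L (π r) (π s) = L r s)
    (i j : V) (hij : π i = j) :
    Multiset.map (fun r => Ψ r i) Finset.univ.val
        = Multiset.map (fun r => Ψ r j) Finset.univ.val ∧
    MDPA (fun r => Ψ r i) (fun r => Ψ r j) = 0 ∧
    Real.exp (-(MDPA (fun r => Ψ r i) (fun r => Ψ r j))) = 1 := by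
  have : Nonempty V := ⟨i⟩
  have key : ∀ r s, Ψ (π r) (π s) = Ψ r s := by
    intro r s
    rw [hΨ]
    exact exp_equivariant _ π (fun r s => by simp [hπ r s]) r s
  have hcol : ∀ r, Ψ (π r) j = Ψ r i := by
    intro r; rw [← hij]; exact key r i
  have hmdpa : MDPA (fun r => Ψ r i) (fun r => Ψ r j) = 0 := by
    apply le_antisymm
    · calc MDPA (fun r => Ψ r i) (fun r => Ψ r j)
          ≤ ∑ r, |Ψ r i - Ψ (π r) j| := Finset.inf'_le _ (Finset.mem_univ π)
        _ = 0 := by simp [hcol]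
    · apply Finset.le_inf'
      intro σ _
      exact Finset.sum_nonneg fun r _ => abs_nonneg _
  refine ⟨?_, hmdpa, by rw [hmdpa]; simp⟩
  have : Multiset.map (fun r => Ψ r i) Finset.univ.val
      = Multiset.map ((fun r => Ψ r j) ∘ π) Finset.univ.val := by
    apply Multiset.map_congr rfl
    intro r _
    simp [Function.comp, hcol r]
  rw [this, ← Multiset.map_map]
  congr 1
  have := Finset.univ_map_equiv_to_embedding π
  calc Multiset.map (⇑π) Finset.univ.val
      = (Finset.univ.map π.toEmbedding).val := rfl
    _ = Finset.univ.val := by rw [this]
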